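/- In a labelled CFG, suppose node v has exactly one successor v', that Def(v) = {x}, and that Use(v) = F (v models an assignment x := E whose right-hand side has free variables F). If v ∈ Q then rv(Q,v) = (rv(Q,v') \ {x}) ∪ F. -/

import Mathlib

namespace Slicing

/-- A path is a nonempty list of nodes, consecutive ones related by `succ`,
starting at `v` and ending at `v'`. -/
def IsPath {V : Type} (succ : V → V → Prop) (p : List V) (v v' : V) : Prop :=
  p.Chain' succ ∧ p.head? = some v ∧ p.getLast? = some v'

/-- A control-flow graph: an edge relation and an `End` node with no successors,
reachable from every node. -/
structure CFG (V : Type) where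
  succ : V → V → Prop
  End : V
  end_no_succ : ∀ w, ¬ succ End w
  reach_end : ∀ v, ∃ p, IsPath succ p v End

variable {V : Type}

/-- `v1` postdominates `v`. -/
def PD (G : CFG V) (v v1 : V) : Prop :=
  ∀ p, IsPath G.succ p v G.End → v1 ∈ p

/-- `v1` is a proper postdominator of `v`. -/
def ProperPD (G : CFG V) (v v1 : V) : Prop :=
  PD G v v1 ∧ v1 ≠ v

/-- `v1` is a first proper postdominator of `v`: every path from `v` to any other
proper postdominator of `v` contains `v1`. -/
def IsFPPD (G : CFG V) (v v1 : V) : Prop :=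
  ProperPD G v v1 ∧
    ∀ v2, ProperPD G v v2 → v2 ≠ v1 → ∀ p, IsPath G.succ p v v2 → v1 ∈ p

/-- Maximum number of edges of an acyclic path from `v` to `v'`. -/
noncomputable def LAP (G : CFG V) (v v' : V) : ℕ :=
  sSup {n | ∃ p, IsPath G.succ p v v' ∧ p.Nodup ∧ p.length = n + 1}

/-- A node is cycle-inducing if, with `v'` its first proper postdominator,
some successor `vi` of `v` satisfies `LAP vi v' ≥ LAP v v'`. -/
def CycleInducing (G : CFG V) (v : V) : Prop :=
  ∃ v', IsFPPD G v v' ∧ ∃ vi, G.succ v vi ∧ LAP G v v' ≤ LAP G vi v'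

/-- `v` stays outside `Q` until `v'`: every path from `v` to `v'` in which `v'`
occurs only at the final position contains no node of `Q` except possibly `v'`. -/
def StaysOutside (G : CFG V) (Q : Set V) (v v' : V) : Prop :=
  ∀ p, IsPath G.succ p v v' → v' ∉ p.dropLast → ∀ w ∈ p, w ∈ Q → w = v'

/-- `v2` is data dependent on `v1`. -/
def DataDep {Var : Type} (G : CFG V) (Def Use : V → Set Var) (v1 v2 : V) : Prop :=
  ∃ x, x ∈ Use v2 ∧ x ∈ Def v1 ∧
    ∃ p, IsPath G.succ p v1 v2 ∧ 2 ≤ p.length ∧ ∀ w ∈ p.tail.dropLast, x ∉ Def w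

/-- `Q` is closed under data dependence. -/
def ClosedDD {Var : Type} (G : CFG V) (Def Use : V → Set Var) (Q : Set V) : Prop :=
  ∀ v1 v2, v2 ∈ Q → DataDep G Def Use v1 v2 → v1 ∈ Q

/-- The `Q`-relevant variables at `v`. -/
def rv {Var : Type} (G : CFG V) (Def Use : V → Set Var) (Q : Set V) (v : V) : Set Var :=
  {x | ∃ v' ∈ Q, x ∈ Use v' ∧
    ∃ p, IsPath G.succ p v v' ∧ p.Nodup ∧ ∀ w ∈ p, w ≠ v' → x ∉ Def w}

/-- `v'` is a next visible in `Q` of `v`. -/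
def IsNextVisible (G : CFG V) (Q : Set V) (v v' : V) : Prop :=
  (v' ∈ Q ∨ v' = G.End) ∧
    ∀ u, (u ∈ Q ∨ u = G.End) → ∀ p, IsPath G.succ p v u → v' ∈ p

/-- `Q` provides next visibles. -/
def ProvidesNextVisibles (G : CFG V) (Q : Set V) : Prop :=
  ∀ v, ∃ v', IsNextVisible G Q v v'

/-- A weak slice set provides next visibles and is closed under data dependence. -/
def WeakSliceSet {Var : Type} (G : CFG V) (Def Use : V → Set Var) (Q : Set V) : Prop :=
  ProvidesNextVisibles G Q ∧ ClosedDD G Def Use Q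

end Slicing

namespace Slicing

/-- For an assignment node `v ∈ Q` (unique successor `v'`, `Def v = {x}`, `Use v = F`),
`rv(Q,v) = (rv(Q,v') \ {x}) ∪ F`. -/
theorem rv_assign {V Var : Type} [Fintype V] (G : CFG V)
    (Def Use : V → Set Var) (Q : Set V) (v v' : V) (x : Var) (F : Set Var)
    (hsucc : G.succ v v') (huniq : ∀ w, G.succ v w → w = v')
    (hdef : Def v = {x}) (huse : Use v = F) (hQ : v ∈ Q) :
    rv G Def Use Q v = (rv G Def Use Q v' \ {x}) ∪ F := by
  ext y
  simp only [Set.mem_union, Set.mem_diff, Set.mem_singleton_iff]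
  constructor
  · rintro ⟨v'', hv''Q, hyUse, p, ⟨hch, hhd, hlast⟩, hnd, hdefp⟩
    obtain ⟨q, rfl⟩ : ∃ q, p = v :: q := by
      cases p with
      | nil => simp at hhd
      | cons a t =>
        simp only [List.head?_cons, Option.some.injEq] at hhd
        exact ⟨t, by rw [hhd]⟩
    cases q with
    | nil =>
      simp [List.getLast?] at hlast
      subst hlast
      right; rw [← huse]; exact hyUse
    | cons b t =>
      have hb : b = v' := huniq b (List.isChain_cons_cons.mp hch).1
      subst b
      have hlast' : (v' :: t).getLast? = some v'' := by
        simpa using hlast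
      have hvmem : v'' ∈ v' :: t := by
        have := List.getLast?_eq_getLast (l := v' :: t) (by simp)
        rw [this] at hlast'
        exact (Option.some.inj hlast') ▸ List.getLast_mem _
      have hvne : v ≠ v'' := by
        rintro rfl
        exact (List.nodup_cons.mp hnd).1 hvmem
      have hynx : y ∉ Def v := hdefp v (by simp) hvne
      rw [hdef] at hynx
      left
      refine ⟨⟨v'', hv''Q, hyUse, v' :: t,
        ⟨(List.isChain_cons_cons.mp hch).2, rfl, hlast'⟩,
        (List.nodup_cons.mp hnd).2,
        fun w hw hwne => hdefp w (List.mem_cons_of_mem _ hw) hwne⟩, hynx⟩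
  · rintro (⟨⟨v'', hv''Q, hyUse, p, ⟨hch, hhd, hlast⟩, hnd, hdefp⟩, hyx⟩ | hyF)
    · by_cases hv : v ∈ p
      · obtain ⟨l1, l2, rfl⟩ := List.append_of_mem hv
        have hsuf : (v :: l2) <:+ l1 ++ v :: l2 := ⟨l1, rfl⟩
        refine ⟨v'', hv''Q, hyUse, v :: l2,
          ⟨hch.suffix hsuf, rfl, ?_⟩, hnd.sublist hsuf.sublist,
          fun w hw hwne => hdefp w (hsuf.sublist.mem hw) hwne⟩
        rw [← hlast, List.getLast?_append,
          List.getLast?_eq_getLast (l := v :: l2) (by simp), Option.or]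
      · have hne : p ≠ [] := by rintro rfl; simp at hhd
        have hhd' : p.head? = some v' := by
          cases p with
          | nil => simp at hhd
          | cons a t => simp at hhd; simp [hhd]
        refine ⟨v'', hv''Q, hyUse, v :: p,
          ⟨List.isChain_cons.mpr ⟨fun h hh => by
            rw [hhd'] at hh; exact (Option.some.inj hh) ▸ hsucc, hch⟩,
           rfl, by rw [List.getLast?_cons, hlast]; cases p <;> simp_all⟩,
          List.nodup_cons.mpr ⟨hv, hnd⟩, ?_⟩
        intro w hw hwne
        rcases List.mem_cons.mp hw with rfl | hw'
        · rw [hdef]; exact fun h => hyx h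
        · exact hdefp w hw' hwne
    · exact ⟨v, hQ, huse ▸ hyF, [v], ⟨List.isChain_singleton _, rfl, rfl⟩, by simp,
        fun w hw hwne => absurd (by simpa using hw) hwne⟩

end Slicing
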